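/- The density matrix ρ = (1/6)(I − Σ_{i=1}^{6} |φ_i⟩⟨φ_i|) on ℂ^3 ⊗ ℂ^4 (grouping the last two qubit factors ℂ^2⊗ℂ^2 into ℂ^4) is invariant in positivity under partial transposition on the first factor: the partial transpose ρ^{T_A} is positive semidefinite. -/

import Mathlib

open scoped ComplexOrder

noncomputable section

def ket {n : ℕ} (k : Fin n) : Fin n → ℂ := fun j => if j = k then 1 else 0

def dif {n : ℕ} (a b : Fin n) : Fin n → ℂ :=
  fun j => if j = a then 1 else if j = b then -1 else 0

def tp (u : Fin 3 → ℂ) (v w : Fin 2 → ℂ) : Fin 3 × Fin 2 × Fin 2 → ℂ :=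
  fun p => u p.1 * v p.2.1 * w p.2.2

/-- The six normalized vectors `|φ_1⟩, …, |φ_6⟩` in `ℂ^3 ⊗ ℂ^2 ⊗ ℂ^2`. -/
def phi (i : Fin 6) : Fin 3 × Fin 2 × Fin 2 → ℂ :=
  match i with
  | 0 => (Real.sqrt 2 : ℂ)⁻¹ • tp (dif 0 1) (ket 0) (ket 0)
  | 1 => (Real.sqrt 2 : ℂ)⁻¹ • tp (dif 2 0) (ket 1) (ket 0)
  | 2 => (Real.sqrt 2 : ℂ)⁻¹ • tp (ket 1) (ket 1) (dif 0 1)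
  | 3 => (Real.sqrt 2 : ℂ)⁻¹ • tp (dif 1 2) (ket 0) (ket 1)
  | 4 => (Real.sqrt 2 : ℂ)⁻¹ • tp (ket 0) (dif 0 1) (ket 1)
  | 5 => (Real.sqrt 12 : ℂ)⁻¹ • tp (fun _ => 1) (fun _ => 1) (fun _ => 1)

/-- The grouping `ℂ^2 ⊗ ℂ^2 ≅ ℂ^4`, `|b⟩|c⟩ ↦ |2b+c⟩`. -/
def split4 (k : Fin 4) : Fin 2 × Fin 2 := (⟨k.val / 2, by omega⟩, ⟨k.val % 2, by omega⟩)

/-- `|φ_i⟩` viewed in `ℂ^3 ⊗ ℂ^4`. -/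
def phi' (i : Fin 6) : Fin 3 × Fin 4 → ℂ := fun p => phi i (p.1, split4 p.2)

/-- The state `ρ = (1/6)(I − Σ_{i=1}^{6} |φ_i⟩⟨φ_i|)` on `ℂ^3 ⊗ ℂ^4`. -/
def rho : Matrix (Fin 3 × Fin 4) (Fin 3 × Fin 4) ℂ :=
  (6 : ℂ)⁻¹ • ((1 : Matrix (Fin 3 × Fin 4) (Fin 3 × Fin 4) ℂ)
    - ∑ i : Fin 6, Matrix.vecMulVec (phi' i) (star (phi' i)))

/-- Partial transposition on the first (`ℂ^3`) factor:
`(ρ^{T_A})_{(i,k),(j,l)} = ρ_{(j,k),(i,l)}`. -/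
def ptA (M : Matrix (Fin 3 × Fin 4) (Fin 3 × Fin 4) ℂ) :
    Matrix (Fin 3 × Fin 4) (Fin 3 × Fin 4) ℂ :=
  Matrix.of fun p q => M (q.1, p.2) (p.1, q.2)

open Matrix

-- product decomposition
def cc : Fin 6 → ℂ
  | 5 => (Real.sqrt 12 : ℂ)⁻¹
  | _ => (Real.sqrt 2 : ℂ)⁻¹
def uu : Fin 6 → Fin 3 → ℂ
  | 0 => dif 0 1
  | 1 => dif 2 0
  | 2 => ket 1
  | 3 => dif 1 2
  | 4 => ket 0
  | 5 => fun _ => 1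
def vv : Fin 6 → Fin 2 → ℂ
  | 0 => ket 0
  | 1 => ket 1
  | 2 => ket 1
  | 3 => ket 0
  | 4 => dif 0 1
  | 5 => fun _ => 1
def xx : Fin 6 → Fin 2 → ℂ
  | 0 => ket 0
  | 1 => ket 0
  | 2 => dif 0 1
  | 3 => ket 1
  | 4 => ket 1
  | 5 => fun _ => 1
def ww (i : Fin 6) (k : Fin 4) : ℂ := vv i (split4 k).1 * xx i (split4 k).2

lemma phi'_eq (i : Fin 6) (p : Fin 3 × Fin 4) :
    phi' i p = cc i * uu i p.1 * ww i p.2 := by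
  fin_cases i <;>
    simp [phi', phi, tp, cc, uu, vv, xx, ww, Pi.smul_apply, smul_eq_mul] <;> ring

lemma star_cc (i : Fin 6) : star (cc i) = cc i := by
  fin_cases i <;> simp [cc]
lemma star_uu (i : Fin 6) (a : Fin 3) : star (uu i a) = uu i a := by
  fin_cases i <;> simp only [uu, dif, ket] <;> first | (split_ifs <;> simp) | simp
lemma star_ww (i : Fin 6) (b : Fin 4) : star (ww i b) = ww i b := by
  fin_cases i <;> simp only [ww, vv, xx, dif, ket] <;> first | (split_ifs <;> simp) | simp

open Matrix in
lemma dot_eq (n m : Fin 6) : star (phi' n) ⬝ᵥ phi' m =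
    (cc n * cc m) * ((∑ a, uu n a * uu m a) * (∑ b, ww n b * ww m b)) := by
  simp only [dotProduct, Fintype.sum_prod_type, Pi.star_apply, phi'_eq,
    star_mul', star_cc, star_uu, star_ww, Finset.mul_sum, Finset.sum_mul]
  rw [Finset.sum_comm]
  refine Finset.sum_congr rfl fun a _ => Finset.sum_congr rfl fun b _ => by ring

lemma s2 : ((Real.sqrt 2 : ℝ) : ℂ) * ((Real.sqrt 2 : ℝ) : ℂ) = 2 := by
  rw [← Complex.ofReal_mul, Real.mul_self_sqrt (by norm_num)]; norm_num
lemma s12 : ((Real.sqrt 12 : ℝ) : ℂ) * ((Real.sqrt 12 : ℝ) : ℂ) = 12 := by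
  rw [← Complex.ofReal_mul, Real.mul_self_sqrt (by norm_num)]; norm_num

lemma hc : ({x : Fin 2 | x.succ = 2} : Finset _).card = 1 := by decide
open Matrix in
lemma ortho (n m : Fin 6) : star (phi' n) ⬝ᵥ phi' m = if n = m then 1 else 0 := by
  rw [dot_eq]
  fin_cases n <;> fin_cases m <;>
    simp [cc, uu, ww, vv, xx, dif, ket, split4, Fin.sum_univ_succ, Fin.sum_univ_four, hc] <;>
    rw [← mul_inv] <;> norm_num [s2, s12]

def P : Matrix (Fin 3 × Fin 4) (Fin 3 × Fin 4) ℂ :=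
  ∑ i : Fin 6, Matrix.vecMulVec (phi' i) (star (phi' i))

lemma hermP : Pᴴ = P := by
  unfold P
  rw [Matrix.conjTranspose_sum]
  refine Finset.sum_congr rfl fun n _ => ?_
  ext p q
  simp [Matrix.vecMulVec_apply, Matrix.conjTranspose_apply, mul_comm]

open Matrix in
lemma PP : P * P = P := by
  unfold P
  rw [Finset.sum_mul_sum]
  have key : ∀ n m : Fin 6,
      Matrix.vecMulVec (phi' n) (star (phi' n)) * Matrix.vecMulVec (phi' m) (star (phi' m))
        = (star (phi' n) ⬝ᵥ phi' m) • Matrix.vecMulVec (phi' n) (star (phi' m)) := by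
    intro n m
    ext p q
    simp only [Matrix.mul_apply, Matrix.vecMulVec_apply, Matrix.smul_apply, smul_eq_mul,
      dotProduct, Finset.sum_mul, Finset.mul_sum]
    refine Finset.sum_congr rfl fun r _ => by ring
  calc ∑ n : Fin 6, ∑ m : Fin 6,
        Matrix.vecMulVec (phi' n) (star (phi' n)) * Matrix.vecMulVec (phi' m) (star (phi' m))
      = ∑ n : Fin 6, ∑ m : Fin 6,
          (if n = m then (1:ℂ) else 0) • Matrix.vecMulVec (phi' n) (star (phi' m)) := by
        refine Finset.sum_congr rfl fun n _ => Finset.sum_congr rfl fun m _ => ?_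
        rw [key, ortho]
    _ = ∑ n : Fin 6, Matrix.vecMulVec (phi' n) (star (phi' n)) := by
        refine Finset.sum_congr rfl fun n _ => ?_
        rw [Finset.sum_eq_single n]
        · simp
        · intro m _ hm; simp [Ne.symm hm]
        · simp

def rho' : Matrix (Fin 3 × Fin 4) (Fin 3 × Fin 4) ℂ :=
  (6 : ℂ)⁻¹ • ((1 : Matrix (Fin 3 × Fin 4) (Fin 3 × Fin 4) ℂ) - P)

lemma s6 : ((Real.sqrt 6 : ℝ) : ℂ) * ((Real.sqrt 6 : ℝ) : ℂ) = 6 := by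
  rw [← Complex.ofReal_mul, Real.mul_self_sqrt (by norm_num)]; norm_num

lemma rho'_psd : rho'.PosSemidef := by
  have h : rho' = ((Real.sqrt 6 : ℂ)⁻¹ • ((1 : Matrix (Fin 3 × Fin 4) (Fin 3 × Fin 4) ℂ) - P))ᴴ
      * ((Real.sqrt 6 : ℂ)⁻¹ • ((1 : Matrix (Fin 3 × Fin 4) (Fin 3 × Fin 4) ℂ) - P)) := by
    rw [Matrix.conjTranspose_smul, Matrix.conjTranspose_sub, Matrix.conjTranspose_one, hermP,
      Matrix.smul_mul, Matrix.mul_smul, smul_smul]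
    have hst : star ((Real.sqrt 6 : ℂ)⁻¹) = (Real.sqrt 6 : ℂ)⁻¹ := by
      simp
    rw [hst, ← mul_inv, s6]
    have hmul : ((1 : Matrix (Fin 3 × Fin 4) (Fin 3 × Fin 4) ℂ) - P) * (1 - P) = 1 - P := by
      rw [Matrix.sub_mul, Matrix.mul_sub, Matrix.mul_sub, PP]
      simp
    rw [hmul]; rfl
  rw [h]
  exact Matrix.posSemidef_conjTranspose_mul_self _

lemma ptA_rho : ptA rho = rho := by
  ext ⟨i, k⟩ ⟨j, l⟩
  simp only [ptA, rho, Matrix.of_apply, Matrix.smul_apply, Matrix.sub_apply, Matrix.sum_apply,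
    Matrix.vecMulVec_apply, Pi.star_apply, phi'_eq, star_mul', star_cc, star_uu, star_ww,
    Matrix.one_apply, Prod.mk.injEq, smul_eq_mul]
  congr 2
  · simp only [eq_comm (a := j) (b := i)]
  · refine Finset.sum_congr rfl fun n _ => by ring

/-- the partial transpose `ρ^{T_A}` of `ρ` on the first factor is
positive semidefinite. -/
theorem stmt7 : (ptA rho).PosSemidef := by
  rw [ptA_rho]
  exact rho'_psd


end
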